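/- For all nonnegative integers a, b, c, d, the binomial coefficient C(a+b+c+d+2, a+b+1) equals the sum over pairs (i,j) with i+j=b of C(a+c+i+1, c) * C(j+d, d), plus the sum over pairs (i,j) with i+j=d of C(a+c+i+1, a) * C(j+b, b). -/

import Mathlib

lemma hockey' (m a d : ℕ) :
    (m+1).choose (a+1) + ∑ i ∈ Finset.range (d+1), (m+i+1).choose a
      = (m+d+2).choose (a+1) := by
  induction d with
  | zero =>
    simp [Nat.choose_succ_succ (m+1) a]
    omega
  | succ d ih =>
    rw [Finset.sum_range_succ, ← add_assoc, ih]
    have e1 : m+(d+1)+2 = (m+d+2)+1 := by omega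
    rw [e1, Nat.choose_succ_succ (m+d+2) a]
    have e2 : m+(d+1)+1 = m+d+2 := by omega
    rw [e2]
    simp only [Nat.succ_eq_add_one]
    omega

lemma Trec (f : ℕ → ℕ) (b d : ℕ) :
    (∑ i ∈ Finset.range (b+2), f i * (b+1-i+(d+1)).choose (d+1))
      = (∑ i ∈ Finset.range (b+1), f i * (b-i+(d+1)).choose (d+1))
      + (∑ i ∈ Finset.range (b+2), f i * (b+1-i+d).choose d) := by
  have h1 : ∀ i ∈ Finset.range (b+2),
      f i * (b+1-i+(d+1)).choose (d+1)
        = f i * (b+1-i+d).choose d + f i * (b+1-i+d).choose (d+1) := by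
    intro i _
    have : b+1-i+(d+1) = (b+1-i+d)+1 := by omega
    rw [this, Nat.choose_succ_succ, mul_add]
  rw [Finset.sum_congr rfl h1, Finset.sum_add_distrib]
  have h2 : (∑ i ∈ Finset.range (b+2), f i * (b+1-i+d).choose (d+1))
      = ∑ i ∈ Finset.range (b+1), f i * (b-i+(d+1)).choose (d+1) := by
    rw [Finset.sum_range_succ]
    have : b+1-(b+1)+d = d := by omega
    rw [this, Nat.choose_succ_self d]
    simp only [mul_zero, add_zero]
    refine Finset.sum_congr rfl fun i hi => ?_
    have hi' : i ≤ b := by simpa [Nat.lt_succ_iff] using hi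
    have : b+1-i+d = b-i+(d+1) := by omega
    rw [this]
  rw [h2]
  omega

theorem binomial_identity_two (a b c d : ℕ) :
    (a + b + c + d + 2).choose (a + b + 1) =
      (∑ p ∈ Finset.HasAntidiagonal.antidiagonal b, (a + c + p.1 + 1).choose c * (p.2 + d).choose d) +
      (∑ p ∈ Finset.HasAntidiagonal.antidiagonal d, (a + c + p.1 + 1).choose a * (p.2 + b).choose b) := by
  rw [Finset.Nat.sum_antidiagonal_eq_sum_range_succ_mk,
      Finset.Nat.sum_antidiagonal_eq_sum_range_succ_mk]
  dsimp only
  induction d generalizing b with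
  | zero =>
    simp only [Nat.choose_zero_right, mul_one, Finset.sum_range_one, add_zero,
      Nat.succ_eq_add_one, Nat.sub_self, zero_add, Nat.choose_self]
    have key := hockey' (a+c) c b
    have s1 : (a+c+1).choose a = (a+c+1).choose (c+1) := by
      rw [← Nat.choose_symm (show c+1 ≤ a+c+1 by omega)]
      congr 1
      omega
    have s2 : (a+b+c+2).choose (a+b+1) = (a+c+b+2).choose (c+1) := by
      have h := Nat.choose_symm (show a+b+1 ≤ a+c+b+2 by omega)
      calc (a+b+c+2).choose (a+b+1) = (a+c+b+2).choose (a+b+1) := by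
            rw [show a+b+c+2 = a+c+b+2 by omega]
        _ = (a+c+b+2).choose (a+c+b+2-(a+b+1)) := h.symm
        _ = (a+c+b+2).choose (c+1) := by congr 1; omega
    rw [s1, s2]
    omega
  | succ d ih =>
    induction b with
    | zero =>
      simp only [Nat.choose_zero_right, mul_one, Finset.sum_range_one, add_zero,
        Nat.succ_eq_add_one, Nat.sub_self, zero_add, Nat.choose_self]
      have key := hockey' (a+c) a (d+1)
      have s1 : (a+c+1).choose c = (a+c+1).choose (a+1) := by
        rw [← Nat.choose_symm (show a+1 ≤ a+c+1 by omega)]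
        congr 1
        omega
      rw [s1]
      omega
    | succ b ihb =>
      have t1 := Trec (fun i => (a+c+i+1).choose c) b d
      have t2 := Trec (fun i => (a+c+i+1).choose a) d b
      have h2 := ih (b+1)
      rw [show (b:ℕ).succ = b+1 from rfl, show ((d:ℕ)+1).succ = d+2 from rfl] at ihb
      rw [show ((b:ℕ)+1).succ = b+2 from rfl, show (d:ℕ).succ = d+1 from rfl] at h2
      rw [show ((b:ℕ)+1).succ = b+2 from rfl, show ((d:ℕ)+1).succ = d+2 from rfl]
      have pas : (a+(b+1)+c+(d+1)+2).choose (a+(b+1)+1)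
          = (a+b+c+(d+1)+2).choose (a+b+1) + (a+(b+1)+c+d+2).choose (a+(b+1)+1) := by
        have e1 : a+(b+1)+c+(d+1)+2 = (a+b+c+(d+1)+2)+1 := by omega
        rw [e1, Nat.choose_succ_succ]
        have e2 : a+(b+1) = a+b+1 := by omega
        rw [e2]
        simp only [Nat.succ_eq_add_one]
        rw [show a+b+1+c+d+2 = a+b+c+(d+1)+2 by omega]
      rw [pas, ihb, h2, t1, t2]
      ring
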